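/- The hyperspace C([0,∞)) of nonempty closed connected subsets of the ray [0,∞), equipped with the Vietoris topology, is path-connected. -/

import Mathlib

open Set

/-- The hyperspace `C([0,∞))` of nonempty closed connected subsets of the ray
`[0,∞)`, viewed as subsets of `ℝ` contained in `[0,∞)`. -/
def CRay : Type := {A : Set ℝ // IsClosed A ∧ IsConnected A ∧ A ⊆ Ici (0:ℝ)}

/-- The Vietoris topology on `C([0,∞))`, generated by the subbasic sets
`U⁺ = {A : A ⊆ U}` and `V⁻ = {A : A ∩ V ≠ ∅}` for `U`, `V` open in `[0,∞)`
(i.e. relatively open subsets of the ray). -/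
instance : TopologicalSpace CRay :=
  TopologicalSpace.generateFrom
    ({S | ∃ U : Set ℝ, (∃ W : Set ℝ, IsOpen W ∧ U = W ∩ Ici 0) ∧
        S = {A : CRay | A.1 ⊆ U}} ∪
     {S | ∃ V : Set ℝ, (∃ W : Set ℝ, IsOpen W ∧ V = W ∩ Ici 0) ∧
        S = {A : CRay | (A.1 ∩ V).Nonempty}})

/-- The moving interval: at `t = 0` (with `u = 1`) it is `Icc a b`, with `u = 0`
it is `Ici a`; at `t = 1` it is `Ici 0`. -/
def Sset (a b u t : ℝ) : Set ℝ :=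
  {x | (1 - t) * a ≤ x ∧ u * (1 - t) * x ≤ u * (1 - t) * b + t}

section SsetLemmas

variable {a b u t : ℝ}

lemma Sset_closed : IsClosed (Sset a b u t) := by
  have h1 : IsClosed {x : ℝ | (1 - t) * a ≤ x} := isClosed_le continuous_const continuous_id
  have h2 : IsClosed {x : ℝ | u * (1 - t) * x ≤ u * (1 - t) * b + t} :=
    isClosed_le (by continuity) continuous_const
  exact h1.inter h2

lemma left_mem_Sset (ha : 0 ≤ a) (hab : a ≤ b) (hu : 0 ≤ u) (ht0 : 0 ≤ t) (ht1 : t ≤ 1) :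
    (1 - t) * a ∈ Sset a b u t := by
  have hc : 0 ≤ u * (1 - t) := mul_nonneg hu (by linarith)
  have h2 : (1 - t) * a ≤ b := by nlinarith
  refine ⟨le_refl _, ?_⟩
  have := mul_le_mul_of_nonneg_left h2 hc
  linarith

lemma Sset_ordConnected (hu : 0 ≤ u) (ht1 : t ≤ 1) : OrdConnected (Sset a b u t) := by
  constructor
  rintro x ⟨hx1, hx2⟩ y ⟨hy1, hy2⟩ z ⟨hz1, hz2⟩
  constructor
  · linarith
  · nlinarith [mul_nonneg hu (sub_nonneg.2 ht1)]

lemma Sset_subset_Ici (ha : 0 ≤ a) (ht1 : t ≤ 1) : Sset a b u t ⊆ Ici (0:ℝ) := by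
  rintro x ⟨hx1, -⟩
  have : 0 ≤ (1 - t) * a := mul_nonneg (by linarith) ha
  exact le_trans this hx1

lemma Sset_mem_CRay (ha : 0 ≤ a) (hab : a ≤ b) (hu : 0 ≤ u) (ht0 : 0 ≤ t) (ht1 : t ≤ 1) :
    IsClosed (Sset a b u t) ∧ IsConnected (Sset a b u t) ∧ Sset a b u t ⊆ Ici (0:ℝ) :=
  ⟨Sset_closed, ⟨⟨_, left_mem_Sset ha hab hu ht0 ht1⟩,
    (Sset_ordConnected hu ht1).isPreconnected⟩, Sset_subset_Ici ha ht1⟩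

lemma Sset_mono (ha : 0 ≤ a) (hu : 0 ≤ u) {t' : ℝ} (ht0 : 0 ≤ t) (htt' : t ≤ t')
    (ht1 : t' ≤ 1) : Sset a b u t ⊆ Sset a b u t' := by
  rintro x ⟨hx1, hx2⟩
  have hc' : 0 ≤ u * (1 - t') := mul_nonneg hu (by linarith)
  constructor
  · nlinarith
  · rcases le_or_gt x b with h | h
    · have := mul_le_mul_of_nonneg_left h hc'
      linarith
    · have h1 : u * (1 - t') ≤ u * (1 - t) := by nlinarith
      have h2 : u * (1 - t') * (x - b) ≤ u * (1 - t) * (x - b) :=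
        mul_le_mul_of_nonneg_right h1 (by linarith)
      nlinarith

end SsetLemmas

/-- Classification: every element of the hyperspace is `Icc a b` or `Ici a`. -/
lemma cray_classify (A : Set ℝ) (hc : IsClosed A) (hconn : IsConnected A)
    (hsub : A ⊆ Ici (0:ℝ)) :
    (∃ a b : ℝ, 0 ≤ a ∧ a ≤ b ∧ A = Icc a b) ∨ (∃ a : ℝ, 0 ≤ a ∧ A = Ici a) := by
  have hne : A.Nonempty := hconn.nonempty
  have hbdd : BddBelow A := (bddBelow_Ici (a := (0:ℝ))).mono hsub
  have hinf : sInf A ∈ A := hc.csInf_mem hne hbdd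
  have hinf0 : 0 ≤ sInf A := hsub hinf
  have hord : OrdConnected A := hconn.isPreconnected.ordConnected
  rcases em (BddAbove A) with hab | hab
  · left
    have hsup : sSup A ∈ A := hc.csSup_mem hne hab
    refine ⟨sInf A, sSup A, hinf0, csInf_le_csSup hne hbdd hab, ?_⟩
    apply Subset.antisymm
    · exact fun x hx => ⟨csInf_le hbdd hx, le_csSup hab hx⟩
    · exact hord.out hinf hsup
  · right
    refine ⟨sInf A, hinf0, ?_⟩
    apply Subset.antisymm
    · exact fun x hx => csInf_le hbdd hx
    · intro x hx
      obtain ⟨y, hy, hxy⟩ := (not_bddAbove_iff).1 hab x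
      exact hord.out hinf hy ⟨hx, le_of_lt hxy⟩

/-- Constructor keeping the type `CRay` (with its Vietoris topology instance). -/
def mkCRay (A : Set ℝ) (h : IsClosed A ∧ IsConnected A ∧ A ⊆ Ici (0:ℝ)) : CRay := ⟨A, h⟩

set_option maxHeartbeats 2000000 in
lemma continuous_Sset_path (a b u : ℝ) (ha : 0 ≤ a) (hab : a ≤ b) (hu : u = 0 ∨ u = 1) :
    Continuous (fun t : unitInterval =>
      mkCRay (Sset a b u t)
        (Sset_mem_CRay ha hab (by rcases hu with h|h <;> simp [h]) t.2.1 t.2.2)) := by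
  have hu0 : 0 ≤ u := by rcases hu with h|h <;> simp [h]
  have hu1 : u ≤ 1 := by rcases hu with h|h <;> simp [h]
  apply continuous_generateFrom_iff.mpr
  rintro s (⟨U, ⟨W, hW, rfl⟩, rfl⟩ | ⟨V, ⟨W, hW, rfl⟩, rfl⟩)
  · -- the set U⁺ : preimage is {t | Sset a b u t ⊆ W ∩ Ici 0}
    have hpre : ∀ t : unitInterval, t ∈ (fun t : unitInterval =>
        mkCRay (Sset a b u t) (Sset_mem_CRay ha hab (by rcases hu with h|h <;> simp [h])
          t.2.1 t.2.2)) ⁻¹' {A : CRay | A.1 ⊆ W ∩ Ici 0} ↔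
        Sset a b u t.1 ⊆ W ∩ Ici 0 := fun t => Iff.rfl
    by_cases hP1 : Sset a b u 1 ⊆ W ∩ Ici 0
    · have : (fun t : unitInterval =>
          mkCRay (Sset a b u t) (Sset_mem_CRay ha hab (by rcases hu with h|h <;> simp [h])
            t.2.1 t.2.2)) ⁻¹' {A : CRay | A.1 ⊆ W ∩ Ici 0} = univ := by
        apply eq_univ_of_forall
        intro t
        rw [hpre]
        exact (Sset_mono ha hu0 t.2.1 t.2.2 le_rfl).trans hP1
      rw [this]; exact isOpen_univ
    · rw [Metric.isOpen_iff]
      intro t ht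
      rw [hpre] at ht
      have ht1 : t.1 < 1 := by
        rcases lt_or_eq_of_le t.2.2 with h | h
        · exact h
        · exact absurd (h ▸ ht) hP1
      set p : ℝ := 1 - t.1 with hp_def
      have hp : 0 < p := by simp only [hp_def]; linarith
      set r : ℝ := b + t.1 / p with hr_def
      have hrS : r ∈ Sset a b u t.1 := by
        constructor
        · have h1 : (1 - t.1) * a ≤ b := by nlinarith [t.2.1, t.2.2, ha, hab]
          have h2 : 0 ≤ t.1 / p := div_nonneg t.2.1 hp.le
          simp only [hr_def]; linarith
        · have h2 : u * (1 - t.1) * r = u * (1 - t.1) * b + u * t.1 := by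
            rw [hr_def, mul_add, mul_assoc u (1 - t.1) (t.1 / p), ← hp_def, mul_div_assoc', mul_div_cancel_left₀ _ hp.ne']
          have h3 : u * t.1 ≤ t.1 := by nlinarith [t.2.1]
          linarith
      have hrW : r ∈ W := (ht hrS).1
      have hlW : (1 - t.1) * a ∈ W :=
        (ht (left_mem_Sset ha hab hu0 t.2.1 t.2.2)).1
      obtain ⟨ε₁, hε₁, hb1⟩ := Metric.isOpen_iff.1 hW _ hlW
      obtain ⟨ε₂, hε₂, hb2⟩ := Metric.isOpen_iff.1 hW _ hrW
      refine ⟨min (p/2) (min (ε₁/(a+1)) (ε₂*p^2/4)), by positivity, ?_⟩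
      intro t' ht'
      rw [Metric.mem_ball, Subtype.dist_eq, Real.dist_eq] at ht'
      rw [mem_preimage]
      show Sset a b u t'.1 ⊆ W ∩ Ici 0
      rcases le_or_gt t'.1 t.1 with hle | hgt
      · exact (Sset_mono ha hu0 t'.2.1 hle t.2.2).trans ht
      · have hd : t'.1 - t.1 < min (p/2) (min (ε₁/(a+1)) (ε₂*p^2/4)) := by
          rw [abs_lt] at ht'; linarith [ht'.2]
        have hd1 : t'.1 - t.1 < p/2 := lt_of_lt_of_le hd (min_le_left _ _)
        have hd2 : t'.1 - t.1 < ε₁/(a+1) :=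
          lt_of_lt_of_le hd ((min_le_right _ _).trans (min_le_left _ _))
        have hd3 : t'.1 - t.1 < ε₂*p^2/4 :=
          lt_of_lt_of_le hd ((min_le_right _ _).trans (min_le_right _ _))
        have ht'1 : t'.1 < 1 := by simp only [hp_def] at hd1; linarith
        intro x hx
        have hx0 : x ∈ Ici (0:ℝ) := Sset_subset_Ici ha t'.2.2 hx
        refine ⟨?_, hx0⟩
        by_cases hxt : x ∈ Sset a b u t.1
        · exact (ht hxt).1
        · obtain ⟨hx1, hx2⟩ := hx
          simp only [Sset, mem_setOf_eq, not_and, not_le] at hxt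
          rcases lt_or_ge x ((1 - t.1) * a) with hxl | hxl
          · -- left violation
            have hd2' : (t'.1 - t.1) * (a + 1) < ε₁ := (lt_div_iff₀ (by positivity)).1 hd2
            apply hb1
            rw [Metric.mem_ball, Real.dist_eq, abs_lt]
            constructor
            · -- x - (1-t)a > -ε₁ : since x ≥ (1-t')a
              nlinarith [ha, hε₁, hx1, hd2', hgt.le]
            · linarith
          · -- right violation
            have hviol : u * (1 - t.1) * b + t.1 < u * (1 - t.1) * x := hxt hxl
            have hu_eq : u = 1 := by
              rcases hu with h | h
              · exfalso; rw [h] at hviol; simp at hviol; linarith [t.2.1]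
              · exact h
            rw [hu_eq] at hviol hx2
            have hq : (0:ℝ) < 1 - t'.1 := by linarith
            -- x > r
            have hxr : r < x := by
              rw [hr_def]
              have h5 : t.1 / p < x - b := by
                rw [div_lt_iff₀ hp]
                simp only [hp_def]
                nlinarith [hviol]
              linarith
            -- x ≤ b + t'.1 / (1 - t'.1)
            have hxr' : x ≤ b + t'.1 / (1 - t'.1) := by
              have : x - b ≤ t'.1 / (1 - t'.1) := by
                rw [le_div_iff₀ hq]
                nlinarith
              linarith
            apply hb2
            rw [Metric.mem_ball, Real.dist_eq, abs_lt]
            refine ⟨by linarith, ?_⟩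
            -- x - r < ε₂
            have hkey : t'.1 / (1 - t'.1) - t.1 / p < ε₂ := by
              rw [div_sub_div _ _ (ne_of_gt hq) (ne_of_gt hp), div_lt_iff₀ (mul_pos hq hp)]
              simp only [hp_def] at hd1 hd3 ⊢
              nlinarith [hp, hd1, hd3, hε₂,
                mul_nonneg hε₂.le (sq_nonneg (1 - t.1)),
                mul_pos (mul_pos hε₂ (show (0:ℝ) < 1 - t.1 by linarith))
                  (show (0:ℝ) < (1 - t'.1) - (1 - t.1)/2 by linarith)]
            rw [hr_def]
            linarith [hkey, hxr']
  · -- the set V⁻ : preimage is {t | (Sset a b u t ∩ (W ∩ Ici 0)).Nonempty}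
    rw [Metric.isOpen_iff]
    intro t ht
    rw [mem_preimage, mem_setOf_eq] at ht
    obtain ⟨x, hxS, hxW, hx0⟩ := ht
    obtain ⟨ε, hε, hball⟩ := Metric.isOpen_iff.1 hW x hxW
    rcases eq_or_lt_of_le t.2.1 with ht0 | ht0
    · -- t = 0 : everything is ≥ t
      refine ⟨1, one_pos, fun t' _ => ?_⟩
      rw [mem_preimage, mem_setOf_eq]
      exact ⟨x, Sset_mono ha hu0 t.2.1 (ht0 ▸ t'.2.1) t'.2.2 hxS, hxW, hx0⟩
    · set δ : ℝ := ε/2 with hδ_def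
      have hδ : 0 < δ := by positivity
      obtain ⟨hx1, hx2⟩ := hxS
      -- g s := u(1-s)(x - δ - b) - s is negative at t
      have hgopen : IsOpen {s : ℝ | u * (1 - s) * (x - δ - b) - s < 0} :=
        isOpen_lt (by continuity) continuous_const
      have hgt : u * (1 - t.1) * (x - δ - b) - t.1 < 0 := by
        rcases eq_or_lt_of_le (mul_nonneg hu0 (by linarith [t.2.2] : (0:ℝ) ≤ 1 - t.1))
          with hc | hc
        · rw [← hc]; simpa using ht0
        · nlinarith
      obtain ⟨η, hη, hbg⟩ := Metric.isOpen_iff.1 hgopen _ hgt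
      refine ⟨min η (min δ (ε/(a+1))), by positivity, ?_⟩
      intro t' ht'
      rw [Metric.mem_ball, Subtype.dist_eq, Real.dist_eq] at ht'
      rw [mem_preimage, mem_setOf_eq]
      rcases le_or_gt t.1 t'.1 with hle | hgt2
      · exact ⟨x, Sset_mono ha hu0 t.2.1 hle t'.2.2 ⟨hx1, hx2⟩, hxW, hx0⟩
      · -- t' < t : use x' = max ((1-t')a) (x - δ)
        have hdη : |t'.1 - t.1| < η := lt_of_lt_of_le ht' (min_le_left _ _)
        have hdδ : t.1 - t'.1 < δ :=
          lt_of_lt_of_le (by rw [abs_lt] at ht'; linarith [ht'.1])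
            ((min_le_right _ _).trans (min_le_left _ _))
        have hdε : t.1 - t'.1 < ε/(a+1) :=
          lt_of_lt_of_le (by rw [abs_lt] at ht'; linarith [ht'.1])
            ((min_le_right _ _).trans (min_le_right _ _))
        have hgt' : u * (1 - t'.1) * (x - δ - b) - t'.1 < 0 := by
          have := hbg (by rw [Metric.mem_ball, Real.dist_eq]; exact hdη)
          exact this
        have hc' : 0 ≤ u * (1 - t'.1) := mul_nonneg hu0 (by linarith [t'.2.2])
        have hδε : δ < ε := by rw [hδ_def]; linarith
        have hdε' : (t.1 - t'.1) * (a + 1) < ε := (lt_div_iff₀ (by positivity)).1 hdε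
        refine ⟨max ((1 - t'.1) * a) (x - δ), ⟨le_max_left _ _, ?_⟩, ?_, ?_⟩
        · -- right condition for the witness
          rcases max_cases ((1 - t'.1) * a) (x - δ) with ⟨hm, -⟩ | ⟨hm, -⟩ <;> rw [hm]
          · have h1 : (1 - t'.1) * a ≤ b := by nlinarith [t'.2.1, t'.2.2]
            have h2 := mul_le_mul_of_nonneg_left h1 hc'
            linarith [t'.2.1]
          · nlinarith [hgt']
        · -- the witness lies in W
          apply hball
          rw [Metric.mem_ball, Real.dist_eq, abs_lt]
          constructor
          · -- -ε < x' - x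
            have h3 : x - δ ≤ max ((1 - t'.1) * a) (x - δ) := le_max_right _ _
            linarith
          · -- x' - x < ε
            rcases max_cases ((1 - t'.1) * a) (x - δ) with ⟨hm, -⟩ | ⟨hm, -⟩ <;> rw [hm]
            · nlinarith [ha, hx1, hdε', hgt2.le]
            · linarith
        · -- the witness is nonnegative
          have h4 : (0:ℝ) ≤ (1 - t'.1) * a := mul_nonneg (by linarith [t'.2.2]) ha
          exact le_trans h4 (le_max_left _ _)

/-- The whole ray, as an element of the hyperspace. -/
def Omega : CRay :=
  ⟨Ici 0, isClosed_Ici, ⟨⟨0, self_mem_Ici⟩, isPreconnected_Ici⟩, subset_rfl⟩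

lemma Sset_one : Sset a b u 1 = Ici (0:ℝ) := by
  ext x; simp [Sset]

lemma joined_omega (A : CRay) : Joined A Omega := by
  obtain ⟨hcl, hconn, hsub⟩ := A.2
  have hclass := cray_classify A.1 hcl hconn hsub
  have key : ∀ a b u : ℝ, 0 ≤ a → a ≤ b → (u = 0 ∨ u = 1) → A.1 = Sset a b u 0 →
      Joined A Omega := by
    intro a b u ha hab hu hA
    have hu' : 0 ≤ u := by rcases hu with h|h <;> simp [h]
    refine ⟨{ toFun := fun t => mkCRay (Sset a b u t) (Sset_mem_CRay ha hab hu' t.2.1 t.2.2),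
              continuous_toFun := ?_, source' := ?_, target' := ?_ }⟩
    · exact continuous_Sset_path a b u ha hab hu
    · exact Subtype.ext (by simpa [mkCRay] using hA.symm)
    · exact Subtype.ext (by simpa [mkCRay, Omega] using Sset_one)
  rcases hclass with ⟨a, b, ha, hab, hA⟩ | ⟨a, ha, hA⟩
  · refine key a b 1 ha hab (Or.inr rfl) ?_
    rw [hA]; ext x; simp [Sset, Icc]
  · refine key a a 0 ha le_rfl (Or.inl rfl) ?_
    rw [hA]; ext x; simp [Sset]

/-- The hyperspace `C([0,∞))` with the Vietoris topology is path-connected. -/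
theorem stmt_16 : PathConnectedSpace CRay := by
  refine ⟨⟨Omega⟩, fun A B => ?_⟩
  exact (joined_omega A).trans (joined_omega B).symm
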